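/- For n ≥ 1, let α = (α₁,…,α_{n+1}) and β = (β₁,…,β_{n+1}) with all αᵢ, βᵢ > 0, and let G_{α,β} be the product of Gamma distributions on (ℝ₊*)^{n+1}, with density f(y) = ∏ᵢ βᵢ^{αᵢ} yᵢ^{αᵢ−1} e^{−βᵢyᵢ}/Γ(αᵢ). Then the pushforward H∗G_{α,β} under the homogeneous transform H(y) = y/(Σᵢ yᵢ), read through the chart x ↦ (x₁,…,xₙ, 1−Σxᵢ) of the open simplex Bₙ, has density with respect to Lebesgue measure on Bₙ equal to (x₁,…,xₙ) ↦ [∏ᵢ₌₁ⁿ xᵢ^{αᵢ−1}]·(1−Σxᵢ)^{α_{n+1}−1}/B(α₁,…,α_{n+1}) · (∏ᵢ βᵢ^{αᵢ}) / [β₁x₁ + ⋯ + βₙxₙ + β_{n+1}(1−Σxᵢ)]^{α₁+⋯+α_{n+1}}. In particular, when all βᵢ are equal, this is the Dirichlet distribution Dir(α₁,…,α_{n+1}). -/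

import Mathlib

open MeasureTheory
open scoped ENNReal BigOperators

namespace Stmt18Aux

open Matrix

variable (n : ℕ)

def Lmat : Matrix (Fin (n+1)) (Fin (n+1)) ℝ :=
  fun i j => if i = Fin.last n then (if j = Fin.last n then 1 else -1)
    else (if j = i then 1 else 0)

def Pmat (z : Fin (n+1) → ℝ) : Matrix (Fin (n+1)) (Fin (n+1)) ℝ :=
  fun i j => if i = Fin.last n then (if j = Fin.last n then 1 else 0)
    else (if j = i then z (Fin.last n) else if j = Fin.last n then z i else 0)

lemma Lmat_det : (Lmat n).det = 1 := by
  rw [Matrix.det_of_lowerTriangular (Lmat n)]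
  · simp [Lmat]
  · intro i j hij
    have hij' : i < j := hij
    have hi : i ≠ Fin.last n := (hij'.trans_le (Fin.le_last j)).ne
    simp [Lmat, hi, hij'.ne']

lemma Pmat_det (z : Fin (n+1) → ℝ) : (Pmat n z).det = z (Fin.last n) ^ n := by
  rw [Matrix.det_of_upperTriangular]
  · rw [Fin.prod_univ_castSucc]
    simp [Pmat, (Fin.castSucc_lt_last _).ne]
  · intro i j hij
    have hij' : (j : Fin (n+1)) < i := hij
    have hj : j ≠ Fin.last n := (hij'.trans_le (Fin.le_last i)).ne
    simp only [Pmat]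
    rcases eq_or_ne i (Fin.last n) with h | h
    · simp [h, hj]
    · simp [h, hij'.ne, hj]

lemma Lmat_mulVec (v : Fin (n+1) → ℝ) :
    (Lmat n).mulVec v = fun i => if i = Fin.last n
      then v (Fin.last n) - ∑ k : Fin n, v (Fin.castSucc k) else v i := by
  funext i
  rcases eq_or_ne i (Fin.last n) with h | h
  · subst h
    simp only [Matrix.mulVec, dotProduct, Lmat, if_pos rfl]
    rw [Fin.sum_univ_castSucc]
    simp [(Fin.castSucc_lt_last _).ne]
    ring
  · simp only [Matrix.mulVec, dotProduct, Lmat, if_neg h]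
    rw [Finset.sum_eq_single i]
    · simp
    · intro b _ hb; simp [hb]
    · intro hb; exact absurd (Finset.mem_univ i) hb

lemma Pmat_mulVec (z v : Fin (n+1) → ℝ) :
    (Pmat n z).mulVec v = fun i => if i = Fin.last n
      then v (Fin.last n)
      else z (Fin.last n) * v i + z i * v (Fin.last n) := by
  funext i
  rcases eq_or_ne i (Fin.last n) with h | h
  · subst h
    simp only [Matrix.mulVec, dotProduct, Pmat, if_pos rfl]
    rw [Finset.sum_eq_single (Fin.last n)]
    · simp
    · intro b _ hb; simp [hb]
    · intro hb; exact absurd (Finset.mem_univ _) hb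
  · simp only [Matrix.mulVec, dotProduct, Pmat, if_neg h]
    have : ∀ j : Fin (n+1),
        (if j = i then z (Fin.last n) else if j = Fin.last n then z i else 0) * v j
        = (if j = i then z (Fin.last n) * v j else 0)
          + (if j = Fin.last n then z i * v j else 0) := by
      intro j
      rcases eq_or_ne j i with hj | hj
      · subst hj; simp [h]
      · rcases eq_or_ne j (Fin.last n) with hj2 | hj2
        · subst hj2; simp [hj]
        · simp [hj, hj2]
    rw [Finset.sum_congr rfl (fun j _ => this j), Finset.sum_add_distrib,
      Finset.sum_ite_eq' Finset.univ i, Finset.sum_ite_eq' Finset.univ (Fin.last n)]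
    simp

noncomputable def Lclm : (Fin (n+1) → ℝ) →L[ℝ] (Fin (n+1) → ℝ) :=
  (Matrix.toLin' (Lmat n)).toContinuousLinearMap

noncomputable def Pclm (z : Fin (n+1) → ℝ) : (Fin (n+1) → ℝ) →L[ℝ] (Fin (n+1) → ℝ) :=
  (Matrix.toLin' (Pmat n z)).toContinuousLinearMap

def Psi (z : Fin (n+1) → ℝ) : Fin (n+1) → ℝ :=
  fun i => if i = Fin.last n then z (Fin.last n) else z (Fin.last n) * z i

noncomputable def Phi (z : Fin (n+1) → ℝ) : Fin (n+1) → ℝ := Lclm n (Psi n z)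

noncomputable def DPhi (z : Fin (n+1) → ℝ) :
    (Fin (n+1) → ℝ) →L[ℝ] (Fin (n+1) → ℝ) := (Lclm n).comp (Pclm n z)

lemma Lclm_apply (v : Fin (n+1) → ℝ) : Lclm n v = fun i => if i = Fin.last n
    then v (Fin.last n) - ∑ k : Fin n, v (Fin.castSucc k) else v i := by
  rw [Lclm]
  simp only [LinearMap.coe_toContinuousLinearMap', Matrix.toLin'_apply]
  exact Lmat_mulVec n v

lemma Pclm_apply (z v : Fin (n+1) → ℝ) : Pclm n z v = fun i => if i = Fin.last n
    then v (Fin.last n)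
    else z (Fin.last n) * v i + z i * v (Fin.last n) := by
  rw [Pclm]
  simp only [LinearMap.coe_toContinuousLinearMap', Matrix.toLin'_apply]
  exact Pmat_mulVec n z v

lemma Phi_apply (z : Fin (n+1) → ℝ) : Phi n z = fun i => if i = Fin.last n
    then z (Fin.last n) * (1 - ∑ k : Fin n, z (Fin.castSucc k))
    else z (Fin.last n) * z i := by
  rw [Phi, Lclm_apply]
  funext i
  rcases eq_or_ne i (Fin.last n) with h | h
  · subst h
    simp [Psi, (Fin.castSucc_lt_last _).ne]
    rw [mul_sub, mul_one, Finset.mul_sum]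
  · simp [Psi, h]

lemma hasFDerivAt_Psi (z : Fin (n+1) → ℝ) : HasFDerivAt (Psi n) (Pclm n z) z := by
  apply hasFDerivAt_pi''
  intro i
  rcases eq_or_ne i (Fin.last n) with h | h
  · subst h
    have he : (ContinuousLinearMap.proj (Fin.last n)).comp (Pclm n z)
        = (ContinuousLinearMap.proj (R := ℝ) (φ := fun _ : Fin (n+1) => ℝ) (Fin.last n)) := by
      ext v
      simp [Pclm_apply]
    rw [he]
    exact (hasFDerivAt_apply (𝕜 := ℝ) (F' := fun _ : Fin (n+1) => ℝ) (Fin.last n) z).congr_of_eventuallyEq (by filter_upwards with w; simp [Psi])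
  · have he : (ContinuousLinearMap.proj i).comp (Pclm n z)
        = z (Fin.last n) • (ContinuousLinearMap.proj (R := ℝ) (φ := fun _ : Fin (n+1) => ℝ) i)
          + z i • (ContinuousLinearMap.proj (R := ℝ) (φ := fun _ : Fin (n+1) => ℝ) (Fin.last n)) := by
      ext v
      simp [Pclm_apply, h]
    rw [he]
    have h1 : HasFDerivAt (fun z : Fin (n+1) → ℝ => z (Fin.last n))
        (ContinuousLinearMap.proj (R := ℝ) (φ := fun _ : Fin (n+1) => ℝ) (Fin.last n)) z :=
      hasFDerivAt_apply (𝕜 := ℝ) (F' := fun _ : Fin (n+1) => ℝ) _ z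
    have h2 : HasFDerivAt (fun z : Fin (n+1) → ℝ => z i)
        (ContinuousLinearMap.proj (R := ℝ) (φ := fun _ : Fin (n+1) => ℝ) i) z :=
      hasFDerivAt_apply (𝕜 := ℝ) (F' := fun _ : Fin (n+1) => ℝ) _ z
    have := h1.mul h2
    exact this.congr_of_eventuallyEq (by filter_upwards with w; simp [Psi, h])

lemma hasFDerivAt_Phi (z : Fin (n+1) → ℝ) : HasFDerivAt (Phi n) (DPhi n z) z :=
  (Lclm n).hasFDerivAt.comp z (hasFDerivAt_Psi n z)

lemma DPhi_det (z : Fin (n+1) → ℝ) : (DPhi n z).det = z (Fin.last n) ^ n := by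
  rw [DPhi, ContinuousLinearMap.det, ContinuousLinearMap.toLinearMap_comp, Lclm, Pclm,
    LinearMap.coe_toContinuousLinearMap, LinearMap.coe_toContinuousLinearMap,
    LinearMap.det_comp, LinearMap.det_toLin', LinearMap.det_toLin',
    Lmat_det, Pmat_det, one_mul]

lemma sum_Phi (z : Fin (n+1) → ℝ) : ∑ i, Phi n z i = z (Fin.last n) := by
  rw [Phi_apply, Fin.sum_univ_castSucc]
  simp [(Fin.castSucc_lt_last _).ne]
  rw [mul_sub, mul_one, Finset.mul_sum]
  ring

lemma key_integral (α β : Fin (n+1) → ℝ) (hα : ∀ i, 0 < α i) (hβ : ∀ i, 0 < β i)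
    (c : Fin (n+1) → ℝ) (hc : ∀ i, 0 < c i) :
    ∫⁻ u in Set.Ioi (0:ℝ), ENNReal.ofReal (u ^ n *
      ∏ i, β i ^ α i * (u * c i) ^ (α i - 1) * Real.exp (-(β i * (u * c i))) / Real.Gamma (α i))
    = ENNReal.ofReal ((∏ i, β i ^ α i * c i ^ (α i - 1) / Real.Gamma (α i)) *
        ((1 / ∑ i, β i * c i) ^ (∑ i, α i) * Real.Gamma (∑ i, α i))) := by
  set A := ∑ i, α i with hA_def
  set R := ∑ i, β i * c i with hR_def
  set C := ∏ i, β i ^ α i * c i ^ (α i - 1) / Real.Gamma (α i) with hC_def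
  have hA : 0 < A := Finset.sum_pos (fun i _ => hα i) Finset.univ_nonempty
  have hR : 0 < R := Finset.sum_pos (fun i _ => mul_pos (hβ i) (hc i)) Finset.univ_nonempty
  have hC : 0 < C := Finset.prod_pos fun i _ => div_pos
    (mul_pos (Real.rpow_pos_of_pos (hβ i) _) (Real.rpow_pos_of_pos (hc i) _))
    (Real.Gamma_pos_of_pos (hα i))
  have hstep : ∀ u ∈ Set.Ioi (0:ℝ), u ^ n *
      ∏ i, β i ^ α i * (u * c i) ^ (α i - 1) * Real.exp (-(β i * (u * c i))) / Real.Gamma (α i)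
      = C * (u ^ (A - 1) * Real.exp (-(R * u))) := by
    intro u hu
    have hu0 : (0:ℝ) < u := hu
    have hfac : ∀ i : Fin (n+1),
        β i ^ α i * (u * c i) ^ (α i - 1) * Real.exp (-(β i * (u * c i))) / Real.Gamma (α i)
        = (β i ^ α i * c i ^ (α i - 1) / Real.Gamma (α i)) *
          (Real.exp (Real.log u * (α i - 1)) * Real.exp (-(β i * c i * u))) := by
      intro i
      rw [Real.mul_rpow hu0.le (hc i).le, ← Real.rpow_def_of_pos hu0,
        show -(β i * (u * c i)) = -(β i * c i * u) by ring]
      ring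
    rw [Finset.prod_congr rfl fun i _ => hfac i, Finset.prod_mul_distrib,
      Finset.prod_mul_distrib, ← Real.exp_sum, ← Real.exp_sum, ← Finset.mul_sum]
    have e1 : (∑ i : Fin (n+1), (α i - 1)) = A - (n+1) := by
      rw [Finset.sum_sub_distrib, ← hA_def]
      simp
    have e2 : (∑ i : Fin (n+1), -(β i * c i * u)) = -(R * u) := by
      have := Finset.sum_neg_distrib (s := (Finset.univ : Finset (Fin (n+1))))
        (f := fun i => β i * c i * u)
      rw [this, ← Finset.sum_mul, ← hR_def]
    rw [e1, e2]
    have e3 : u ^ n * Real.exp (Real.log u * (A - (n+1))) = u ^ (A - 1) := by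
      rw [← Real.rpow_def_of_pos hu0, ← Real.rpow_natCast u n, ← Real.rpow_add hu0]
      congr 1
      push_cast
      ring
    calc u ^ n * (C * (Real.exp (Real.log u * (A - (n+1))) * Real.exp (-(R * u))))
        = C * ((u ^ n * Real.exp (Real.log u * (A - (n+1)))) * Real.exp (-(R * u))) := by ring
      _ = C * (u ^ (A - 1) * Real.exp (-(R * u))) := by rw [e3]
  have hint : IntegrableOn (fun u : ℝ => u ^ (A - 1) * Real.exp (-(R * u))) (Set.Ioi 0) := by
    have := integrableOn_rpow_mul_exp_neg_mul_rpow (show (-1:ℝ) < A - 1 by linarith)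
      (by norm_num : (0:ℝ) < 1) hR
    simpa [Real.rpow_one, neg_mul] using this
  have hnn : 0 ≤ᵐ[volume.restrict (Set.Ioi (0:ℝ))]
      fun u : ℝ => u ^ (A - 1) * Real.exp (-(R * u)) := by
    refine (ae_restrict_iff' measurableSet_Ioi).2 (ae_of_all _ fun u hu => ?_)
    exact mul_nonneg (Real.rpow_nonneg (le_of_lt hu) _) (Real.exp_nonneg _)
  calc ∫⁻ u in Set.Ioi (0:ℝ), ENNReal.ofReal (u ^ n *
        ∏ i, β i ^ α i * (u * c i) ^ (α i - 1) * Real.exp (-(β i * (u * c i))) / Real.Gamma (α i))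
      = ∫⁻ u in Set.Ioi (0:ℝ),
          ENNReal.ofReal C * ENNReal.ofReal (u ^ (A - 1) * Real.exp (-(R * u))) :=
        setLIntegral_congr_fun measurableSet_Ioi (fun u hu => by
          rw [hstep u hu, ENNReal.ofReal_mul hC.le])
    _ = ENNReal.ofReal C * ∫⁻ u in Set.Ioi (0:ℝ),
          ENNReal.ofReal (u ^ (A - 1) * Real.exp (-(R * u))) :=
        lintegral_const_mul' _ _ ENNReal.ofReal_ne_top
    _ = ENNReal.ofReal C * ENNReal.ofReal ((1 / R) ^ A * Real.Gamma A) := by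
        rw [← ofReal_integral_eq_lintegral_ofReal hint hnn,
          Real.integral_rpow_mul_exp_neg_mul_Ioi hA hR]
    _ = ENNReal.ofReal (C * ((1 / R) ^ A * Real.Gamma A)) := (ENNReal.ofReal_mul hC.le).symm

lemma gform (α β : Fin (n+1) → ℝ) (hα : ∀ i, 0 < α i) (hβ : ∀ i, 0 < β i)
    (x : Fin n → ℝ) (c : Fin (n+1) → ℝ) (hcx : c = Fin.snoc x (1 - ∑ j, x j))
    (hc : ∀ i, 0 < c i) :
    (∏ i, β i ^ α i * c i ^ (α i - 1) / Real.Gamma (α i)) *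
      ((1 / ∑ i, β i * c i) ^ (∑ i, α i) * Real.Gamma (∑ i, α i))
    = (∏ i : Fin n, x i ^ (α (Fin.castSucc i) - 1)) *
        (1 - ∑ i, x i) ^ (α (Fin.last n) - 1) /
        ((∏ i, Real.Gamma (α i)) / Real.Gamma (∑ i, α i)) *
        (∏ i, β i ^ α i) / (∑ i, β i * c i) ^ (∑ i, α i) := by
  have hR : 0 < ∑ i, β i * c i :=
    Finset.sum_pos (fun i _ => mul_pos (hβ i) (hc i)) Finset.univ_nonempty
  have hcprod : ∏ i, c i ^ (α i - 1)
      = (∏ i : Fin n, x i ^ (α (Fin.castSucc i) - 1)) *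
        (1 - ∑ i, x i) ^ (α (Fin.last n) - 1) := by
    rw [Fin.prod_univ_castSucc]
    subst hcx
    simp
  have h1 : Real.Gamma (∑ i, α i) ≠ 0 :=
    (Real.Gamma_pos_of_pos (Finset.sum_pos (fun i _ => hα i) Finset.univ_nonempty)).ne'
  have h2 : (∏ i, Real.Gamma (α i)) ≠ 0 :=
    (Finset.prod_pos fun i _ => Real.Gamma_pos_of_pos (hα i)).ne'
  have h3 : (∑ i, β i * c i) ^ (∑ i, α i) ≠ 0 := (Real.rpow_pos_of_pos hR _).ne'
  rw [Finset.prod_div_distrib, Finset.prod_mul_distrib, hcprod, one_div,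
    Real.inv_rpow hR.le]
  field_simp

end Stmt18Aux

/-- Homogeneous transform of a product of Gamma distributions: for `αᵢ, βᵢ > 0`, the
pushforward under `H(y) = y/(Σ yᵢ)` of the measure on `(ℝ₊*)^{n+1}` with density
`∏ᵢ βᵢ^{αᵢ} yᵢ^{αᵢ−1} e^{−βᵢyᵢ}/Γ(αᵢ)`, read through the chart
`x ↦ (x₁,…,xₙ,1−Σxᵢ)` of the open simplex `Bₙ`, has density w.r.t. Lebesgue measure
on `Bₙ` equal to
`x ↦ [∏ xᵢ^{αᵢ−1}](1−Σxᵢ)^{α_{n+1}−1}/B(α) · (∏βᵢ^{αᵢ})/(Σᵢ βᵢ·(chart x)ᵢ)^{Σα}`,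
where `B(α) = ∏Γ(αᵢ)/Γ(Σαᵢ)`. -/
theorem stmt18 (n : ℕ) (hn : 1 ≤ n) (α β : Fin (n+1) → ℝ)
    (hα : ∀ i, 0 < α i) (hβ : ∀ i, 0 < β i) :
    let H : (Fin (n+1) → ℝ) → (Fin (n+1) → ℝ) := fun y i => y i / ∑ j, y j
    let Pos : Set (Fin (n+1) → ℝ) := {y | ∀ i, 0 < y i}
    let f : (Fin (n+1) → ℝ) → ℝ := fun y =>
      ∏ i, β i ^ α i * y i ^ (α i - 1) * Real.exp (-(β i * y i)) / Real.Gamma (α i)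
    let G : Measure (Fin (n+1) → ℝ) :=
      (volume.restrict Pos).withDensity (fun y => ENNReal.ofReal (f y))
    let B : Set (Fin n → ℝ) := {x | (∀ i, x i ∈ Set.Ioo (0:ℝ) 1) ∧ ∑ i, x i < 1}
    let chart : (Fin n → ℝ) → (Fin (n+1) → ℝ) := fun x => Fin.snoc x (1 - ∑ j, x j)
    let Bα : ℝ := (∏ i, Real.Gamma (α i)) / Real.Gamma (∑ i, α i)
    let g : (Fin n → ℝ) → ℝ := fun x =>
      (∏ i : Fin n, x i ^ (α (Fin.castSucc i) - 1)) *
        (1 - ∑ i, x i) ^ (α (Fin.last n) - 1) / Bα *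
        (∏ i, β i ^ α i) / (∑ i, β i * chart x i) ^ (∑ i, α i)
    G.map H = ((volume.restrict B).withDensity (fun x => ENNReal.ofReal (g x))).map chart := by
  intro H Pos f G B chart Bα g
  open Stmt18Aux in
  -- basic measurability
  have msum : Measurable fun y : Fin (n+1) → ℝ => ∑ j, y j :=
    Finset.measurable_sum _ fun j _ => measurable_pi_apply j
  have msum' : Measurable fun x : Fin n → ℝ => ∑ j, x j :=
    Finset.measurable_sum _ fun j _ => measurable_pi_apply j
  have mH : Measurable H := measurable_pi_lambda _ fun i => (measurable_pi_apply i).div msum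
  have mchart : Measurable chart := by
    apply measurable_pi_lambda
    intro i
    induction i using Fin.lastCases with
    | last =>
        simp only [chart, Fin.snoc_last]
        exact measurable_const.sub msum'
    | cast k =>
        simp only [chart, Fin.snoc_castSucc]
        exact measurable_pi_apply k
  have mf : Measurable f := by
    apply Finset.measurable_prod
    intro i _
    exact ((measurable_const.mul ((measurable_pi_apply i).pow measurable_const)).mul
      (Real.measurable_exp.comp (measurable_const.mul (measurable_pi_apply i)).neg)).div_const _
  have mPos : MeasurableSet Pos := by
    have : Pos = ⋂ i, {y : Fin (n+1) → ℝ | 0 < y i} := by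
      ext y; simp [Pos, Set.mem_iInter]
    rw [this]
    exact MeasurableSet.iInter fun i => measurableSet_lt measurable_const (measurable_pi_apply i)
  have mB : MeasurableSet B := by
    have : B = (⋂ i, ({x : Fin n → ℝ | 0 < x i} ∩ {x | x i < 1})) ∩ {x | ∑ i, x i < 1} := by
      ext x; simp [B, Set.mem_iInter, Set.mem_Ioo, forall_and]
    rw [this]
    exact ((MeasurableSet.iInter fun i =>
        (measurableSet_lt measurable_const (measurable_pi_apply i)).inter
          (measurableSet_lt (measurable_pi_apply i) measurable_const))).inter
      (measurableSet_lt msum' measurable_const)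
  -- the blow-up map and its domain
  set e := MeasurableEquiv.piFinSuccAbove (fun _ : Fin (n+1) => ℝ) (Fin.last n) with he_def
  set S : Set (Fin (n+1) → ℝ) := e ⁻¹' ((Set.Ioi (0:ℝ)) ×ˢ B) with hS_def
  have mS : MeasurableSet S := e.measurable (measurableSet_Ioi.prod mB)
  have hSmem : ∀ z : Fin (n+1) → ℝ,
      z ∈ S ↔ 0 < z (Fin.last n) ∧ (fun k : Fin n => z (Fin.castSucc k)) ∈ B := by
    intro z
    have h2 : (e z).1 = z (Fin.last n) := rfl
    have h3 : (e z).2 = fun k : Fin n => z (Fin.castSucc k) := by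
      funext k
      show z ((Fin.last n).succAbove k) = _
      rw [Fin.succAbove_last]
    rw [hS_def]
    simp only [Set.mem_preimage, Set.mem_prod, Set.mem_Ioi]
    rw [h2, h3]
  have cpos : ∀ x ∈ B, ∀ i, 0 < chart x i := by
    intro x hx i
    induction i using Fin.lastCases with
    | last =>
        simp only [chart, Fin.snoc_last]
        have := hx.2
        linarith
    | cast k =>
        simp only [chart, Fin.snoc_castSucc]
        exact (hx.1 k).1
  have hPhi_chart : ∀ z : Fin (n+1) → ℝ,
      Phi n z = fun i => z (Fin.last n) * chart (fun k : Fin n => z (Fin.castSucc k)) i := by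
    intro z
    rw [Phi_apply]
    funext i
    induction i using Fin.lastCases with
    | last => simp [chart, Fin.snoc_last]
    | cast k => simp [chart, Fin.snoc_castSucc, (Fin.castSucc_lt_last k).ne]
  have hInj : Set.InjOn (Phi n) S := by
    intro z hz z' hz' hzz
    have hl : z (Fin.last n) = z' (Fin.last n) := by
      rw [← sum_Phi n z, ← sum_Phi n z', hzz]
    have hl0 : z (Fin.last n) ≠ 0 := ((hSmem z).1 hz).1.ne'
    funext i
    induction i using Fin.lastCases with
    | last => exact hl
    | cast k =>
        have h1 := congrFun hzz (Fin.castSucc k)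
        rw [Phi_apply, Phi_apply] at h1
        simp only [(Fin.castSucc_lt_last k).ne, if_false] at h1
        rw [← hl] at h1
        exact mul_left_cancel₀ hl0 h1
  have hPhiS : Phi n '' S = Pos := by
    ext y
    constructor
    · rintro ⟨z, hz, rfl⟩
      obtain ⟨hzl, hzB⟩ := (hSmem z).1 hz
      intro i
      rw [hPhi_chart z]
      exact mul_pos hzl (cpos _ hzB i)
    · intro hy
      have hy' : ∀ i, 0 < y i := hy
      set u := ∑ i, y i with hu_def
      have hu : 0 < u := Finset.sum_pos (fun i _ => hy' i) Finset.univ_nonempty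
      have husum : (∑ k : Fin n, y (Fin.castSucc k)) = u - y (Fin.last n) := by
        rw [hu_def, Fin.sum_univ_castSucc]; ring
      refine ⟨Fin.snoc (fun k : Fin n => y (Fin.castSucc k) / u) u, ?_, ?_⟩
      · rw [hSmem]
        constructor
        · simp [Fin.snoc_last, hu]
        · constructor
          · intro k
            simp only [Fin.snoc_castSucc]
            constructor
            · exact div_pos (hy' _) hu
            · rw [div_lt_one hu]
              have hlt : y (Fin.castSucc k) < u := by
                have h2 : 0 < y (Fin.last n) := hy' _
                have h3 : ∀ j : Fin n, 0 ≤ y (Fin.castSucc j) := fun j => (hy' _).le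
                have : (∑ k : Fin n, y (Fin.castSucc k)) ≥ y (Fin.castSucc k) :=
                  Finset.single_le_sum (fun j _ => h3 j) (Finset.mem_univ k)
                linarith [husum]
              exact hlt
          · simp only [Fin.snoc_castSucc]
            rw [← Finset.sum_div, div_lt_one hu, husum]
            have : 0 < y (Fin.last n) := hy' _
            linarith
      · rw [hPhi_chart]
        funext i
        have hzl : (Fin.snoc (fun k : Fin n => y (Fin.castSucc k) / u) u : Fin (n+1) → ℝ)
            (Fin.last n) = u := by simp
        induction i using Fin.lastCases with
        | last =>
            simp only [hzl, chart, Fin.snoc_last, Fin.snoc_castSucc]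
            rw [← Finset.sum_div, husum]
            field_simp
            ring
        | cast k =>
            simp only [hzl, chart, Fin.snoc_castSucc]
            field_simp
  have hHPhi : ∀ z ∈ S, H (Phi n z) = chart (fun k : Fin n => z (Fin.castSucc k)) := by
    intro z hz
    obtain ⟨hzl, _⟩ := (hSmem z).1 hz
    funext i
    show Phi n z i / ∑ j, Phi n z j = _
    rw [sum_Phi, hPhi_chart z]
    exact mul_div_cancel_left₀ _ hzl.ne'
  -- abbreviation for the indicator integrand
  ext s hs
  set F' : ℝ × (Fin n → ℝ) → ℝ≥0∞ := fun p =>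
    ENNReal.ofReal (p.1 ^ n) * Set.indicator s (fun _ => (1:ℝ≥0∞)) (chart p.2) *
      ENNReal.ofReal (f (fun i => p.1 * chart p.2 i)) with hF'_def
  have mF' : Measurable F' := by
    refine Measurable.mul (Measurable.mul ?_ ?_) ?_
    · exact (measurable_fst.pow_const n).ennreal_ofReal
    · exact (measurable_const.indicator hs).comp (mchart.comp measurable_snd)
    · exact (mf.comp (measurable_pi_lambda _ fun i =>
        measurable_fst.mul ((measurable_pi_apply i).comp (mchart.comp measurable_snd)))).ennreal_ofReal
  have key : ∀ x ∈ B, (∫⁻ u in Set.Ioi (0:ℝ), F' (u, x)) =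
      (chart ⁻¹' s).indicator (fun x => ENNReal.ofReal (g x)) x := by
    intro x hx
    by_cases hxs : chart x ∈ s
    · rw [Set.indicator_of_mem (show x ∈ chart ⁻¹' s from hxs)]
      have h1 : ∀ u : ℝ, u ∈ Set.Ioi (0:ℝ) →
          F' (u, x) = ENNReal.ofReal (u ^ n * f (fun i => u * chart x i)) := by
        intro u hu
        rw [hF'_def]
        simp only [Set.indicator_of_mem hxs, mul_one]
        rw [ENNReal.ofReal_mul (pow_nonneg (le_of_lt hu) n)]
      rw [setLIntegral_congr_fun measurableSet_Ioi h1]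
      have := key_integral n α β hα hβ (chart x) (cpos x hx)
      rw [this, gform n α β hα hβ x (chart x) rfl (cpos x hx)]
    · rw [Set.indicator_of_notMem (show x ∉ chart ⁻¹' s from hxs)]
      have h1 : ∀ u : ℝ, u ∈ Set.Ioi (0:ℝ) → F' (u, x) = 0 := by
        intro u hu
        rw [hF'_def]
        simp [Set.indicator_of_notMem hxs]
      rw [setLIntegral_congr_fun measurableSet_Ioi h1, lintegral_zero]
  -- left-hand side
  have L1 : (G.map H) s = ∫⁻ y in Pos,
      (H ⁻¹' s).indicator (fun y => ENNReal.ofReal (f y)) y := by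
    rw [Measure.map_apply mH hs]
    show ((volume.restrict Pos).withDensity fun y => ENNReal.ofReal (f y)) (H ⁻¹' s) = _
    rw [withDensity_apply _ (mH hs), lintegral_indicator (mH hs)]
  have L3 : ∫⁻ y in Pos, (H ⁻¹' s).indicator (fun y => ENNReal.ofReal (f y)) y
      = ∫⁻ z in S, ENNReal.ofReal |(DPhi n z).det| *
          (H ⁻¹' s).indicator (fun y => ENNReal.ofReal (f y)) (Phi n z) := by
    rw [← hPhiS]
    exact lintegral_image_eq_lintegral_abs_det_fderiv_mul volume mS
      (fun z _ => (hasFDerivAt_Phi n z).hasFDerivWithinAt) hInj _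
  have L4 : ∀ z ∈ S, ENNReal.ofReal |(DPhi n z).det| *
      (H ⁻¹' s).indicator (fun y => ENNReal.ofReal (f y)) (Phi n z) = F' (e z) := by
    intro z hz
    obtain ⟨hzl, hzB⟩ := (hSmem z).1 hz
    have hez : e z = (z (Fin.last n), fun k : Fin n => z (Fin.castSucc k)) := by
      refine Prod.ext rfl ?_
      funext k
      show z ((Fin.last n).succAbove k) = _
      rw [Fin.succAbove_last]
    rw [hez, hF'_def]
    dsimp only
    have hdet : |(DPhi n z).det| = z (Fin.last n) ^ n := by
      rw [DPhi_det]
      exact abs_of_nonneg (pow_nonneg hzl.le n)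
    rw [hdet]
    by_cases hms : chart (fun k : Fin n => z (Fin.castSucc k)) ∈ s
    · have hmem : Phi n z ∈ H ⁻¹' s := by
        rw [Set.mem_preimage, hHPhi z hz]; exact hms
      rw [Set.indicator_of_mem hmem, Set.indicator_of_mem hms]
      simp only [mul_one]
      congr 1
      rw [hPhi_chart z]
    · have hmem : Phi n z ∉ H ⁻¹' s := by
        rw [Set.mem_preimage, hHPhi z hz]; exact hms
      rw [Set.indicator_of_notMem hmem, Set.indicator_of_notMem hms]
      simp
  have L5 : ∫⁻ z in S, F' (e z)
      = ∫⁻ p in (Set.Ioi (0:ℝ)) ×ˢ B, F' p ∂((volume : Measure ℝ).prod volume) :=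
    (volume_preserving_piFinSuccAbove (fun _ : Fin (n+1) => ℝ)
      (Fin.last n)).setLIntegral_comp_preimage_emb e.measurableEmbedding F' _
  have L6 : ∫⁻ p in (Set.Ioi (0:ℝ)) ×ˢ B, F' p ∂((volume : Measure ℝ).prod volume)
      = ∫⁻ x in B, ∫⁻ u in Set.Ioi (0:ℝ), F' (u, x) := by
    rw [← Measure.prod_restrict, lintegral_prod_symm _ mF'.aemeasurable]
  -- right-hand side
  have R1 : (((volume.restrict B).withDensity fun x => ENNReal.ofReal (g x)).map chart) s
      = ∫⁻ x in B, (chart ⁻¹' s).indicator (fun x => ENNReal.ofReal (g x)) x := by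
    rw [Measure.map_apply mchart hs, withDensity_apply _ (mchart hs),
      lintegral_indicator (mchart hs)]
  rw [L1, L3, setLIntegral_congr_fun mS L4, L5, L6, R1]
  exact setLIntegral_congr_fun mB key
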